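/- For every natural number k ≥ 1 and every integer j with 1 ≤ j ≤ 2^{k−1} − 1, the minimal Colless index satisfies the symmetry c(2^{k−1} + j) = c(2^k − j). -/
import Mathlib


/-- Full binary trees: either a single leaf, or a node with two full binary subtrees. -/
inductive FBT : Type
  | leaf : FBT
  | node : FBT → FBT → FBT

namespace FBT

/-- Number of leaves of a full binary tree. -/
def leaves : FBT → ℕ
  | leaf => 1
  | node a b => leaves a + leaves b

/-- The Colless index: the sum over internal nodes of the absolute difference of the
numbers of leaves of the two maximal pending subtrees. -/
def colless : FBT → ℕ
  | leaf => 0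
  | node a b => colless a + colless b + Nat.dist (leaves a) (leaves b)

end FBT

/-- The minimal Colless index over all full binary trees with `n` leaves. -/
noncomputable def minColless (n : ℕ) : ℕ :=
  sInf {m : ℕ | ∃ T : FBT, T.leaves = n ∧ T.colless = m}


/-- Colless value of maximally balanced tree. -/
def f : ℕ → ℕ
  | 0 => 0
  | 1 => 0
  | (n+2) => f ((n+3)/2) + f ((n+2)/2) + (n+2) % 2
decreasing_by all_goals omega

lemma f_zero : f 0 = 0 := by simp [f]
lemma f_one : f 1 = 0 := by simp [f]

lemma f_rec (n : ℕ) (h : 2 ≤ n) : f n = f ((n+1)/2) + f (n/2) + n % 2 := by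
  match n, h with
  | (n+2), _ => rw [f]

lemma f_two_mul (m : ℕ) : f (2*m) = 2 * f m := by
  match m with
  | 0 => simp [f]
  | (m+1) =>
    rw [f_rec (2*(m+1)) (by omega), show (2*(m+1)+1)/2 = m+1 by omega,
      show (2*(m+1))/2 = m+1 by omega]
    omega

lemma f_odd (m : ℕ) (hm : 1 ≤ m) : f (2*m+1) = f (m+1) + f m + 1 := by
  rw [f_rec (2*m+1) (by omega), show (2*m+1+1)/2 = m+1 by omega,
    show (2*m+1)/2 = m by omega]
  omega

lemma f_key : ∀ n, ∀ p q : ℕ, p + q = n → 1 ≤ p → 1 ≤ q →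
    f (p + q) ≤ f p + f q + Nat.dist p q := by
  intro n
  induction n using Nat.strong_induction_on with
  | _ n ih =>
  intro p q hpq hp hq
  rcases Nat.even_or_odd p with ⟨a, ha⟩ | ⟨a, ha⟩ <;>
    rcases Nat.even_or_odd q with ⟨b, hb⟩ | ⟨b, hb⟩
  · -- both even
    have e1 : f (p + q) = 2 * f (a + b) := by
      rw [show p + q = 2 * (a + b) by omega, f_two_mul]
    have e2 : f p = 2 * f a := by rw [show p = 2 * a by omega, f_two_mul]
    have e3 : f q = 2 * f b := by rw [show q = 2 * b by omega, f_two_mul]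
    have h := ih (a + b) (by omega) a b rfl (by omega) (by omega)
    simp only [Nat.dist] at *
    omega
  · -- p even, q odd
    by_cases hb0 : b = 0
    · subst hb0
      have e1 : f (p + q) = f (a + 1) + f a + 1 := by
        rw [show p + q = 2 * a + 1 by omega, f_odd a (by omega)]
      have e2 : f p = 2 * f a := by rw [show p = 2 * a by omega, f_two_mul]
      have e3 : f q = 0 := by rw [show q = 1 by omega, f_one]
      have h := ih (1 + a) (by omega) 1 a rfl (by omega) (by omega)
      rw [show 1 + a = a + 1 by omega] at h
      simp only [Nat.dist, f_one] at *
      omega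
    · have e1 : f (p + q) = f (a + b + 1) + f (a + b) + 1 := by
        rw [show p + q = 2 * (a + b) + 1 by omega, f_odd _ (by omega)]
      have e2 : f p = 2 * f a := by rw [show p = 2 * a by omega, f_two_mul]
      have e3 : f q = f (b + 1) + f b + 1 := by
        rw [show q = 2 * b + 1 by omega, f_odd b (by omega)]
      have h1 := ih (a + (b + 1)) (by omega) a (b + 1) rfl (by omega) (by omega)
      have h2 := ih (a + b) (by omega) a b rfl (by omega) (by omega)
      rw [show a + (b + 1) = a + b + 1 by omega] at h1
      simp only [Nat.dist] at *
      omega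
  · -- p odd, q even
    by_cases ha0 : a = 0
    · subst ha0
      have e1 : f (p + q) = f (b + 1) + f b + 1 := by
        rw [show p + q = 2 * b + 1 by omega, f_odd b (by omega)]
      have e2 : f p = 0 := by rw [show p = 1 by omega, f_one]
      have e3 : f q = 2 * f b := by rw [show q = 2 * b by omega, f_two_mul]
      have h := ih (1 + b) (by omega) 1 b rfl (by omega) (by omega)
      rw [show 1 + b = b + 1 by omega] at h
      simp only [Nat.dist, f_one] at *
      omega
    · have e1 : f (p + q) = f (a + b + 1) + f (a + b) + 1 := by
        rw [show p + q = 2 * (a + b) + 1 by omega, f_odd _ (by omega)]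
      have e2 : f p = f (a + 1) + f a + 1 := by
        rw [show p = 2 * a + 1 by omega, f_odd a (by omega)]
      have e3 : f q = 2 * f b := by rw [show q = 2 * b by omega, f_two_mul]
      have h1 := ih (a + 1 + b) (by omega) (a + 1) b rfl (by omega) (by omega)
      have h2 := ih (a + b) (by omega) a b rfl (by omega) (by omega)
      rw [show a + 1 + b = a + b + 1 by omega] at h1
      simp only [Nat.dist] at *
      omega
  · -- both odd
    have e1 : f (p + q) = 2 * f (a + b + 1) := by
      rw [show p + q = 2 * (a + b + 1) by omega, f_two_mul]
    by_cases ha0 : a = 0 <;> by_cases hb0 : b = 0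
    · have e2 : f p = 0 := by rw [show p = 1 by omega, f_one]
      have e3 : f q = 0 := by rw [show q = 1 by omega, f_one]
      have e4 : f (a + b + 1) = 0 := by rw [show a + b + 1 = 1 by omega, f_one]
      simp only [Nat.dist] at *
      omega
    · subst ha0
      have e2 : f p = 0 := by rw [show p = 1 by omega, f_one]
      have e3 : f q = f (b + 1) + f b + 1 := by
        rw [show q = 2 * b + 1 by omega, f_odd b (by omega)]
      have h := ih (1 + b) (by omega) 1 b rfl (by omega) (by omega)
      rw [show 1 + b = b + 1 by omega] at h
      rw [show (0:ℕ) + b + 1 = b + 1 by omega] at e1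
      simp only [Nat.dist, f_one] at *
      omega
    · subst hb0
      have e2 : f p = f (a + 1) + f a + 1 := by
        rw [show p = 2 * a + 1 by omega, f_odd a (by omega)]
      have e3 : f q = 0 := by rw [show q = 1 by omega, f_one]
      have h := ih (1 + a) (by omega) 1 a rfl (by omega) (by omega)
      rw [show 1 + a = a + 1 by omega] at h
      rw [show a + 0 + 1 = a + 1 by omega] at e1
      simp only [Nat.dist, f_one] at *
      omega
    · have e2 : f p = f (a + 1) + f a + 1 := by
        rw [show p = 2 * a + 1 by omega, f_odd a (by omega)]
      have e3 : f q = f (b + 1) + f b + 1 := by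
        rw [show q = 2 * b + 1 by omega, f_odd b (by omega)]
      have h1 := ih (a + 1 + b) (by omega) (a + 1) b rfl (by omega) (by omega)
      have h2 := ih (a + (b + 1)) (by omega) a (b + 1) rfl (by omega) (by omega)
      rw [show a + 1 + b = a + b + 1 by omega] at h1
      rw [show a + (b + 1) = a + b + 1 by omega] at h2
      simp only [Nat.dist] at *
      omega

lemma leaves_pos : ∀ T : FBT, 1 ≤ T.leaves := by
  intro T
  induction T with
  | leaf => simp [FBT.leaves]
  | node a b iha ihb => simp [FBT.leaves]; omega

lemma f_le_colless : ∀ T : FBT, f T.leaves ≤ T.colless := by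
  intro T
  induction T with
  | leaf => simp [FBT.leaves, FBT.colless, f_one]
  | node a b iha ihb =>
    have h := f_key (a.leaves + b.leaves) a.leaves b.leaves rfl
      (leaves_pos a) (leaves_pos b)
    simp only [FBT.leaves, FBT.colless]
    have := Nat.add_le_add (Nat.add_le_add iha ihb)
      (le_refl (Nat.dist a.leaves b.leaves))
    omega

/-- Maximally balanced tree with n leaves. -/
def bal : ℕ → FBT
  | 0 => FBT.leaf
  | 1 => FBT.leaf
  | (n+2) => FBT.node (bal ((n+3)/2)) (bal ((n+2)/2))
decreasing_by all_goals omega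

lemma bal_leaves : ∀ n, 1 ≤ n → (bal n).leaves = n := by
  intro n
  induction n using Nat.strong_induction_on with
  | _ n ih =>
  intro hn
  match n, hn with
  | 1, _ => simp [bal, FBT.leaves]
  | (n+2), _ =>
    rw [bal]
    simp only [FBT.leaves]
    rw [ih ((n+3)/2) (by omega) (by omega), ih ((n+2)/2) (by omega) (by omega)]
    omega

lemma bal_colless : ∀ n, 1 ≤ n → (bal n).colless = f n := by
  intro n
  induction n using Nat.strong_induction_on with
  | _ n ih =>
  intro hn
  match n, hn with
  | 1, _ => simp [bal, FBT.colless, f_one]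
  | (n+2), _ =>
    rw [bal]
    simp only [FBT.colless]
    rw [ih ((n+3)/2) (by omega) (by omega), ih ((n+2)/2) (by omega) (by omega),
      bal_leaves ((n+3)/2) (by omega), bal_leaves ((n+2)/2) (by omega),
      f_rec (n+2) (by omega)]
    have : Nat.dist ((n+3)/2) ((n+2)/2) = (n+2) % 2 := by
      simp only [Nat.dist]; omega
    rw [show (n+2+1)/2 = (n+3)/2 by omega, this]

lemma minColless_eq_f (n : ℕ) (hn : 1 ≤ n) : minColless n = f n := by
  have hmem : f n ∈ {m : ℕ | ∃ T : FBT, T.leaves = n ∧ T.colless = m} :=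
    ⟨bal n, bal_leaves n hn, bal_colless n hn⟩
  apply le_antisymm
  · exact Nat.sInf_le hmem
  · have hne : {m : ℕ | ∃ T : FBT, T.leaves = n ∧ T.colless = m}.Nonempty := ⟨_, hmem⟩
    obtain ⟨T, hT1, hT2⟩ := Nat.sInf_mem hne
    unfold minColless
    rw [← hT2, ← hT1]
    exact f_le_colless T

lemma f_pow (k : ℕ) : f (2 ^ k) = 0 := by
  induction k with
  | zero => simpa using f_one
  | succ k ih =>
    rw [show (2:ℕ) ^ (k+1) = 2 * 2 ^ k by ring, f_two_mul, ih]

lemma f_sym : ∀ k a : ℕ, a ≤ 2 ^ k → f (2 ^ k + a) = f (2 ^ (k + 1) - a) := by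
  intro k
  induction k with
  | zero =>
    intro a ha
    interval_cases a
    · rw [show (2:ℕ)^0 + 0 = 2^0 by norm_num, show (2:ℕ)^1 - 0 = 2^1 by norm_num,
        f_pow, f_pow]
    · rw [show (2:ℕ)^0 + 1 = 2 by norm_num, show (2:ℕ)^1 - 1 = 1 by norm_num,
        show (2:ℕ) = 2*1 by norm_num, f_two_mul, f_one]
  | succ k ih =>
    intro a ha
    rcases Nat.even_or_odd a with ⟨b, hb⟩ | ⟨b, hb⟩
    · have hb2 : b ≤ 2 ^ k := by
        have : (2:ℕ)^(k+1) = 2 * 2^k := by ring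
        omega
      have e1 : f (2 ^ (k+1) + a) = 2 * f (2 ^ k + b) := by
        rw [show 2 ^ (k+1) + a = 2 * (2 ^ k + b) by rw [hb]; ring, f_two_mul]
      have e2 : f (2 ^ (k+2) - a) = 2 * f (2 ^ (k+1) - b) := by
        rw [show 2 ^ (k+2) - a = 2 * (2 ^ (k+1) - b) by
          have h1 : (2:ℕ)^(k+2) = 2 * 2^(k+1) := by ring
          have h2 : (2:ℕ)^(k+1) = 2 * 2^k := by ring
          omega, f_two_mul]
      rw [e1, e2, ih b hb2]
    · have h2 : (2:ℕ)^(k+1) = 2 * 2^k := by ring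
      have hb1 : b + 1 ≤ 2 ^ k := by omega
      have e1 : f (2 ^ (k+1) + a) = f (2 ^ k + (b+1)) + f (2 ^ k + b) + 1 := by
        rw [show 2 ^ (k+1) + a = 2 * (2 ^ k + b) + 1 by omega,
          f_odd _ (by have : (1:ℕ) ≤ 2^k := Nat.one_le_two_pow; omega), show 2 ^ k + b + 1 = 2 ^ k + (b+1) by omega]
      have e2 : f (2 ^ (k+2) - a) = f (2 ^ (k+1) - b) + f (2 ^ (k+1) - (b+1)) + 1 := by
        have h1 : (2:ℕ)^(k+2) = 2 * 2^(k+1) := by ring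
        have hpos : 1 ≤ 2 ^ (k+1) - (b+1) := by
          have : (1:ℕ) ≤ 2^k := Nat.one_le_two_pow
          omega
        rw [show 2 ^ (k+2) - a = 2 * (2 ^ (k+1) - (b+1)) + 1 by omega,
          f_odd _ hpos, show 2 ^ (k+1) - (b+1) + 1 = 2 ^ (k+1) - b by omega]
      rw [e1, e2, ih b (by omega), ih (b+1) hb1]
      omega

theorem minColless_symmetry (k : ℕ) (hk : 1 ≤ k) (j : ℕ) (hj1 : 1 ≤ j)
    (hj2 : j ≤ 2 ^ (k - 1) - 1) :
    minColless (2 ^ (k - 1) + j) = minColless (2 ^ k - j) := by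
  have hk1 : k - 1 + 1 = k := by omega
  have hp : (1:ℕ) ≤ 2 ^ (k-1) := Nat.one_le_two_pow
  have hp2 := pow_succ 2 (k-1)
  rw [hk1] at hp2
  rw [minColless_eq_f _ (by omega), minColless_eq_f _ (by omega)]
  have := f_sym (k-1) j (by omega)
  rwa [hk1] at this
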